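/- arXiv:1012.3716 — 2 statements merged into one kernel-verified Lean document; each statement's English description precedes it below -/
import Mathlib

section
/- The function φ(p) = min{ p/3, p/(1+4p), (1−p)/2 } on [0,1] satisfies φ(p) ≤ (7−√17)/16 for all p ∈ [0,1], with equality if and only if p = (1+√17)/8. -/
/-- The edit distance function of `Forb(H₉)`. -/
noncomputable def phiH9 (p : ℝ) : ℝ :=
  min (p / 3) (min (p / (1 + 4 * p)) ((1 - p) / 2))

theorem phiH9_max : ∀ p ∈ Set.Icc (0 : ℝ) 1,
    phiH9 p ≤ (7 - Real.sqrt 17) / 16 ∧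
      (phiH9 p = (7 - Real.sqrt 17) / 16 ↔ p = (1 + Real.sqrt 17) / 8) := by
  intro p hp
  obtain ⟨hp0, hp1⟩ := hp
  set s := Real.sqrt 17 with hs
  have hs2 : s ^ 2 = 17 := Real.sq_sqrt (by norm_num)
  have hsnn : 0 ≤ s := Real.sqrt_nonneg 17
  have hs4 : 4 < s := by nlinarith
  have hs5 : s < 5 := by nlinarith
  have hden : (0:ℝ) < 1 + 4 * p := by linarith
  have hb : phiH9 p ≤ (7 - s) / 16 := by
    by_cases hle : p ≤ (1 + s) / 8
    · refine le_trans (le_trans (min_le_right _ _) (min_le_left _ _)) ?_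
      rw [div_le_div_iff₀ hden (by norm_num)]
      nlinarith [mul_nonneg (by nlinarith : (0:ℝ) ≤ s - 3) (by linarith : (0:ℝ) ≤ (1 + s) / 8 - p)]
    · refine le_trans (le_trans (min_le_right _ _) (min_le_right _ _)) ?_
      push_neg at hle
      linarith
  refine ⟨hb, ?_, ?_⟩
  · intro h
    rcases lt_trichotomy p ((1 + s) / 8) with hlt | heq | hgt
    · exfalso
      have h1 : phiH9 p ≤ p / (1 + 4 * p) :=
        le_trans (min_le_right _ _) (min_le_left _ _)
      have h2 : p / (1 + 4 * p) < (7 - s) / 16 := by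
        rw [div_lt_div_iff₀ hden (by norm_num)]
        nlinarith [mul_pos (by nlinarith : (0:ℝ) < s - 3) (by linarith : (0:ℝ) < (1 + s) / 8 - p)]
      linarith
    · exact heq
    · exfalso
      have h1 : phiH9 p ≤ (1 - p) / 2 :=
        le_trans (min_le_right _ _) (min_le_right _ _)
      have h2 : (1 - p) / 2 < (7 - s) / 16 := by linarith
      linarith
  · intro h
    subst h
    unfold phiH9
    have hA : (1 + s) / 8 / (1 + 4 * ((1 + s) / 8)) = (7 - s) / 16 := by
      rw [div_eq_div_iff (by linarith) (by norm_num)]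
      nlinarith
    have hB : (1 - (1 + s) / 8) / 2 = (7 - s) / 16 := by ring
    have hC : (7 - s) / 16 ≤ (1 + s) / 8 / 3 := by
      rw [div_div]
      rw [div_le_div_iff₀ (by norm_num) (by norm_num)]
      nlinarith
    rw [hA, hB, min_self, min_eq_right hC]
end

section
/- If H is a split graph, then the chromatic number of H equals the clique number of H, and the chromatic number of the complement of H equals the independence number of H. -/
/-- A split graph: the vertex set can be partitioned into a clique and an independent set. -/
def IsSplit {α : Type*} (G : SimpleGraph α) : Prop :=
  ∃ C : Set α, G.IsClique C ∧ Gᶜ.IsClique Cᶜ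

/-- The independence number: the clique number of the complement. -/
noncomputable def indepNum {α : Type*} (G : SimpleGraph α) : ℕ := Gᶜ.cliqueNum

open Classical in
lemma split_chrom {V : Type*} [Fintype V] (G : SimpleGraph V) (hsplit : IsSplit G) :
    G.chromaticNumber = (G.cliqueNum : ℕ∞) := by
  obtain ⟨C, hC, hCc⟩ := hsplit
  -- extend C to a maximal clique D
  obtain ⟨D, ⟨hD, hCD⟩, hDmax⟩ :=
    Set.Finite.exists_maximalFor id {S : Set V | G.IsClique S ∧ C ⊆ S}
      (Set.toFinite _) ⟨C, hC, subset_rfl⟩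
  simp only [id] at hDmax
  have hDcc : Gᶜ.IsClique Dᶜ := hCc.subset (Set.compl_subset_compl.mpr hCD)
  -- every vertex outside D has a non-neighbor in D
  have key : ∀ v ∉ D, ∃ u ∈ D, ¬ G.Adj v u := by
    intro v hv
    by_contra h
    push_neg at h
    have hins : G.IsClique (insert v D) := hD.insert fun b hb _ => h b hb
    have := hDmax (j := insert v D) ⟨hins, hCD.trans (Set.subset_insert _ _)⟩
      (Set.subset_insert _ _)
    exact hv (this (Set.mem_insert v D))
  haveI : Fintype D := Fintype.ofFinite _
  -- a coloring using colors from D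
  let f : V → D := fun v =>
    if h : v ∈ D then ⟨v, h⟩ else ⟨(key v h).choose, (key v h).choose_spec.1⟩
  have hvalid : ∀ {v w : V}, G.Adj v w → f v ≠ f w := by
    intro v w hvw
    by_cases hv : v ∈ D <;> by_cases hw : w ∈ D
    · simp only [f, dif_pos hv, dif_pos hw, ne_eq, Subtype.mk.injEq]
      exact hvw.ne
    · simp only [f, dif_pos hv, dif_neg hw, ne_eq, Subtype.mk.injEq]
      intro hvu
      exact (key w hw).choose_spec.2 (hvu ▸ hvw.symm)
    · simp only [f, dif_neg hv, dif_pos hw, ne_eq, Subtype.mk.injEq]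
      intro hvu
      exact (key v hv).choose_spec.2 (hvu ▸ hvw)
    · exfalso
      exact (hDcc hv hw hvw.ne).2 hvw
  have hcol : G.Colorable (Fintype.card D) := (SimpleGraph.Coloring.mk f hvalid).colorable
  have hcard : Fintype.card D = D.toFinset.card := Set.toFinset_card D ▸ rfl
  have hDle : D.toFinset.card ≤ G.cliqueNum := by
    have : G.IsClique (D.toFinset : Set V) := by rwa [Set.coe_toFinset]
    exact SimpleGraph.IsClique.card_le_cliqueNum (tc := this)
  refine le_antisymm ?_ ?_
  · calc G.chromaticNumber ≤ (Fintype.card D : ℕ∞) := hcol.chromaticNumber_le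
      _ ≤ (G.cliqueNum : ℕ∞) := by exact_mod_cast hcard ▸ hDle
  · obtain ⟨s, hs⟩ := SimpleGraph.exists_isNClique_cliqueNum (G := G)
    have := SimpleGraph.IsClique.card_le_chromaticNumber hs.1
    rwa [hs.2] at this

theorem split_graph_chromatic_eq_clique {V : Type*} [Fintype V] (G : SimpleGraph V)
    (hsplit : IsSplit G) :
    G.chromaticNumber = (G.cliqueNum : ℕ∞) ∧
      Gᶜ.chromaticNumber = (indepNum G : ℕ∞) := by
  obtain ⟨C, hC, hCc⟩ := hsplit
  constructor
  · exact split_chrom G ⟨C, hC, hCc⟩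
  · exact split_chrom Gᶜ ⟨Cᶜ, hCc, by rwa [compl_compl, compl_compl]⟩
end
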